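/- Let $(a_1,b_1),\ldots,(a_m,b_m)$ be points in $\mathbb{R}^2$ and $c_1,\ldots,c_m \in (0,1]$ with $\sum_{i=1}^m c_i = 1$. Then there exist indices $k,\ell$ and $p \in [0,1]$ such that $\sum_{i=1}^m c_i (a_i,b_i) \geq p(a_k,b_k) + (1-p)(a_\ell,b_\ell)$, where $\geq$ is the componentwise order on $\mathbb{R}^2$. -/
import Mathlib

theorem stmt0 (m : ℕ) (a b c : Fin m → ℝ)
    (hc : ∀ i, 0 < c i ∧ c i ≤ 1) (hsum : ∑ i, c i = 1) :
    ∃ (k l : Fin m) (p : ℝ), 0 ≤ p ∧ p ≤ 1 ∧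
      p * a k + (1 - p) * a l ≤ ∑ i, c i * a i ∧
      p * b k + (1 - p) * b l ≤ ∑ i, c i * b i := by
  set Sa := ∑ i, c i * a i with hSa
  set Sb := ∑ i, c i * b i with hSb
  set x : Fin m → ℝ := fun i => a i - Sa with hxdef
  set y : Fin m → ℝ := fun i => b i - Sb with hydef
  have hx0 : ∑ i, c i * x i = 0 := by
    simp only [hxdef, mul_sub]
    rw [Finset.sum_sub_distrib, ← Finset.sum_mul, hsum]
    simp [hSa]
  have hy0 : ∑ i, c i * y i = 0 := by
    simp only [hydef, mul_sub]
    rw [Finset.sum_sub_distrib, ← Finset.sum_mul, hsum]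
    simp [hSb]
  -- reduce to statement about x, y
  suffices h : ∃ (k l : Fin m) (p : ℝ), 0 ≤ p ∧ p ≤ 1 ∧
      p * x k + (1 - p) * x l ≤ 0 ∧ p * y k + (1 - p) * y l ≤ 0 by
    obtain ⟨k, l, p, hp0, hp1, hxk, hyk⟩ := h
    refine ⟨k, l, p, hp0, hp1, ?_, ?_⟩
    · have : x k = a k - Sa := rfl
      have hl : x l = a l - Sa := rfl
      nlinarith [hxk]
    · have : y k = b k - Sb := rfl
      have hl : y l = b l - Sb := rfl
      nlinarith [hyk]
  by_cases hcase : ∃ i, x i ≤ 0 ∧ y i ≤ 0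
  · obtain ⟨i, hxi, hyi⟩ := hcase
    exact ⟨i, i, 1, by norm_num, by norm_num, by simpa using hxi, by simpa using hyi⟩
  push_neg at hcase
  -- every i with x i ≤ 0 has y i > 0
  have key : ∀ i, x i ≤ 0 → 0 < y i := by
    intro i hxi
    by_contra h
    exact absurd (hcase i hxi) (not_lt.mpr (le_of_not_gt h))
  -- A nonempty
  have hA : ∃ i, x i ≤ 0 := by
    by_contra h
    push_neg at h
    have : 0 < ∑ i, c i * x i := by
      apply Finset.sum_pos
      · intro i _; exact mul_pos (hc i).1 (h i)
      · refine Finset.univ_nonempty_iff.mpr ?_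
        rcases Nat.eq_zero_or_pos m with hm | hm
        · subst hm; simp at hsum
        · exact ⟨⟨0, hm⟩⟩
    linarith [hx0]
  have hB : ∃ j, y j ≤ 0 := by
    by_contra h
    push_neg at h
    have : 0 < ∑ i, c i * y i := by
      apply Finset.sum_pos
      · intro i _; exact mul_pos (hc i).1 (h i)
      · refine Finset.univ_nonempty_iff.mpr ?_
        rcases Nat.eq_zero_or_pos m with hm | hm
        · subst hm; simp at hsum
        · exact ⟨⟨0, hm⟩⟩
    linarith [hy0]
  -- pick k in A minimizing x/y
  obtain ⟨i0, hi0⟩ := hA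
  have hAne : (Finset.univ.filter (fun i => x i ≤ 0)).Nonempty :=
    ⟨i0, by simp [hi0]⟩
  obtain ⟨k, hkmem, hkmin⟩ := Finset.exists_min_image _ (fun i => x i / y i) hAne
  simp only [Finset.mem_filter, Finset.mem_univ, true_and] at hkmem
  have hyk : 0 < y k := key k hkmem
  -- find l with y l ≤ 0 and y k * x l - x k * y l ≤ 0
  have hl : ∃ l, y l ≤ 0 ∧ y k * x l - x k * y l ≤ 0 := by
    by_contra h
    push_neg at h
    have hterm : ∀ i, 0 ≤ c i * (y k * x i - x k * y i) := by
      intro i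
      apply mul_nonneg (hc i).1.le
      by_cases hyi : y i ≤ 0
      · exact (h i hyi).le
      · push_neg at hyi
        by_cases hxi : x i ≤ 0
        · -- i in A, use minimality
          have := hkmin i (by simp [hxi])
          have h2 : x k * y i ≤ x i * y k := by
            rw [div_le_div_iff₀ hyk hyi] at this
            linarith
          linarith
        · push_neg at hxi
          have h1 : 0 < y k * x i := mul_pos hyk hxi
          have h2 : 0 ≤ -x k * y i := mul_nonneg (by linarith) hyi.le
          linarith
    obtain ⟨j, hj⟩ := hB
    have hjpos : 0 < c j * (y k * x j - x k * y j) := mul_pos (hc j).1 (h j hj)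
    have hsumpos : 0 < ∑ i, c i * (y k * x i - x k * y i) :=
      Finset.sum_pos' (fun i _ => hterm i) ⟨j, Finset.mem_univ j, hjpos⟩
    have : ∑ i, c i * (y k * x i - x k * y i)
        = y k * (∑ i, c i * x i) - x k * (∑ i, c i * y i) := by
      rw [Finset.mul_sum, Finset.mul_sum, ← Finset.sum_sub_distrib]
      congr 1; ext i; ring
    rw [this, hx0, hy0] at hsumpos
    simp at hsumpos
  obtain ⟨l, hyl, hcross⟩ := hl
  have hxl : 0 < x l := by
    by_contra h
    push_neg at h
    exact absurd (key l h) (not_lt.mpr hyl)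
  have hden : 0 < x l - x k := by linarith
  refine ⟨k, l, x l / (x l - x k), ?_, ?_, ?_, ?_⟩
  · positivity
  · rw [div_le_one hden]; linarith
  · have : x l / (x l - x k) * x k + (1 - x l / (x l - x k)) * x l = 0 := by
      field_simp
      ring
    linarith [this]
  · have : x l / (x l - x k) * y k + (1 - x l / (x l - x k)) * y l
        = (y k * x l - x k * y l) / (x l - x k) := by
      field_simp
      ring
    rw [this]
    exact div_nonpos_of_nonpos_of_nonneg hcross hden.le
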